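/- Let β>0, γ>0, σ>1, 0<α<1, S₀>0, R₀ᵢₙᵢₜ≥0 with (σβ/γ)·R₀ᵢₙᵢₜ < 1, define r(S) := (γ/(σβ))·(1 − (1 − (σβ/γ)·R₀ᵢₙᵢₜ)·(S/S₀)^σ) and R̂(S) := (β/γ)·(S + ασ·r(S)) for 0≤S≤S₀, and assume R̂(S₀) ≤ 1. If (β/γ)·(S₀ + ασ²R₀ᵢₙᵢₜ) < ασ, then R̂ attains a strict global maximum on (0, S₀) at the unique point S̃ := ((β/γ)·S₀ / (σα·(1 − (σβ/γ)·R₀ᵢₙᵢₜ)))^(1/(σ−1)) · S₀, which satisfies 0 < S̃ < S₀; moreover R̂ is strictly increasing on [0, S̃] and strictly decreasing on [S̃, S₀]. -/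

import Mathlib

/-- For `σ > 1`, `ℛ₀ ≤ 1` and `(β/γ)(S₀ + ασ²R₀) < ασ`, the function `R̂`
attains a strict global maximum on `[0,S₀]` at the unique interior point `S̃`; moreover
`R̂` is strictly increasing on `[0,S̃]` and strictly decreasing on `[S̃,S₀]`. -/
theorem sirb_Rhat_unique_max (β γ σ α S₀ R₀init : ℝ)
    (hβ : 0 < β) (hγ : 0 < γ) (hσ : 1 < σ) (hα0 : 0 < α) (hα1 : α < 1)
    (hS₀ : 0 < S₀) (hR₀ : 0 ≤ R₀init) (hR₀lt : σ * β / γ * R₀init < 1)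
    (r Rhat : ℝ → ℝ)
    (hr : ∀ S : ℝ, r S = γ / (σ * β) * (1 - (1 - σ * β / γ * R₀init) * (S / S₀) ^ σ))
    (hRhat : ∀ S : ℝ, Rhat S = β / γ * (S + α * σ * r S))
    (hR0le : Rhat S₀ ≤ 1)
    (hcase : β / γ * (S₀ + α * σ ^ 2 * R₀init) < α * σ)
    (Stilde : ℝ)
    (hSt : Stilde = (β / γ * S₀ / (σ * α * (1 - σ * β / γ * R₀init))) ^ (1 / (σ - 1)) * S₀) :
    0 < Stilde ∧ Stilde < S₀ ∧
      (∀ S ∈ Set.Icc 0 S₀, S ≠ Stilde → Rhat S < Rhat Stilde) ∧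
      StrictMonoOn Rhat (Set.Icc 0 Stilde) ∧ StrictAntiOn Rhat (Set.Icc Stilde S₀) := by
  have hσ0 : (0:ℝ) < σ := by linarith
  set k := β / γ with hk
  have hk0 : 0 < k := div_pos hβ hγ
  set c := 1 - σ * β / γ * R₀init with hcdef
  have hc0 : 0 < c := by simp only [hcdef]; linarith
  have hg : ∀ S, Rhat S = k * S + α - α * c * (S / S₀) ^ σ := by
    intro S
    rw [hRhat, hr]
    simp only [hcdef, hk]
    field_simp
    ring
  set A := k * S₀ / (σ * α * c) with hA
  have hA0 : 0 < A := div_pos (mul_pos hk0 hS₀) (mul_pos (mul_pos hσ0 hα0) hc0)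
  have hA1 : A < 1 := by
    rw [hA, div_lt_one (mul_pos (mul_pos hσ0 hα0) hc0)]
    have hexp : σ * α * c = α * σ - k * (α * σ ^ 2 * R₀init) := by
      simp only [hcdef, hk]; field_simp
    nlinarith
  have hsm1 : (0:ℝ) < σ - 1 := by linarith
  have hStpos : 0 < Stilde := by
    rw [hSt]; exact mul_pos (Real.rpow_pos_of_pos hA0 _) hS₀
  have hStlt : Stilde < S₀ := by
    rw [hSt]
    have h1 : A ^ (1 / (σ - 1)) < 1 := Real.rpow_lt_one hA0.le hA1 (by positivity)
    nlinarith
  have hratio : (Stilde / S₀) ^ (σ - 1) = A := by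
    rw [hSt, mul_div_assoc, div_self hS₀.ne', mul_one,
      ← Real.rpow_mul hA0.le, one_div, inv_mul_cancel₀ hsm1.ne', Real.rpow_one]
  have key : α * c * σ * A / S₀ = k := by
    rw [hA]; field_simp
  -- derivative
  have hderiv : ∀ x : ℝ, 0 < x →
      HasDerivAt Rhat (k - α * c * σ * (x / S₀) ^ (σ - 1) / S₀) x := by
    intro x hx
    have hx0 : x / S₀ ≠ 0 := by positivity
    have h2 : HasDerivAt (fun S : ℝ => S / S₀) (1 / S₀) x := by
      simpa using (hasDerivAt_id x).div_const S₀
    have h1 : HasDerivAt (fun S : ℝ => (S / S₀) ^ σ)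
        (σ * (x / S₀) ^ (σ - 1) * (1 / S₀)) x :=
      (Real.hasDerivAt_rpow_const (Or.inl hx0)).comp x h2 (h₂ := fun y => y ^ σ)
    have h3 : HasDerivAt (fun S => k * S + α - α * c * (S / S₀) ^ σ)
        (k - α * c * σ * (x / S₀) ^ (σ - 1) / S₀) x := by
      have := (((hasDerivAt_id x).const_mul k).add_const α).sub ((h1.const_mul (α * c)))
      exact this.congr_deriv (by ring)
    exact h3.congr_of_eventuallyEq (Filter.Eventually.of_forall fun S => (hg S))
  have hcont : Continuous Rhat := by
    have : Continuous fun S : ℝ => k * S + α - α * c * (S / S₀) ^ σ := by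
      have hrc : Continuous fun S : ℝ => (S / S₀) ^ σ := by
        apply continuous_iff_continuousAt.mpr
        intro x
        exact (Real.continuousAt_rpow_const _ _ (Or.inr hσ0.le)).comp
          ((continuous_id.div_const S₀).continuousAt)
      fun_prop
    exact this.congr fun S => (hg S).symm
  have hmono : StrictMonoOn Rhat (Set.Icc 0 Stilde) := by
    apply strictMonoOn_of_deriv_pos (convex_Icc 0 Stilde) hcont.continuousOn
    intro x hx
    rw [interior_Icc] at hx
    rw [(hderiv x hx.1).deriv]
    have hlt : (x / S₀) ^ (σ - 1) < A := by
      rw [← hratio]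
      exact Real.rpow_lt_rpow (le_of_lt (div_pos hx.1 hS₀)) (by gcongr; exact hx.2) hsm1
    rw [← key, sub_pos]
    gcongr
  have hanti : StrictAntiOn Rhat (Set.Icc Stilde S₀) := by
    apply strictAntiOn_of_deriv_neg (convex_Icc Stilde S₀) hcont.continuousOn
    intro x hx
    rw [interior_Icc] at hx
    rw [(hderiv x (hStpos.trans hx.1)).deriv]
    have hlt : A < (x / S₀) ^ (σ - 1) := by
      rw [← hratio]
      exact Real.rpow_lt_rpow (le_of_lt (div_pos hStpos hS₀)) (by gcongr; exact hx.1) hsm1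
    rw [← key, sub_neg]
    gcongr
  refine ⟨hStpos, hStlt, ?_, hmono, hanti⟩
  intro S hS hne
  rcases lt_or_gt_of_ne hne with h | h
  · exact hmono ⟨hS.1, h.le⟩ ⟨hStpos.le.trans (le_refl _), le_refl _⟩ h
  · exact hanti ⟨le_refl _, hStlt.le⟩ ⟨h.le, hS.2⟩ h
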